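/- The simplicial set C(μ,u) has exactly m+2 vertices: the canonical map ∐_{0≤i≤m+1} Δ[0] → C(μ,u) from the defining pushout induces a bijection from the set {0, 1, …, m+1} onto the set of 0-simplices of C(μ,u). (This is the levelwise form of the paper's computation of the 0-th level of the cone Cone_{μ,f}.) -/

import Mathlib

open CategoryTheory Simplicial Opposite Limits

set_option synthInstance.maxHeartbeats 1000000
set_option maxHeartbeats 1000000

namespace Paper

/-- The vertex `k` of `Δ[q]`, as a map `Δ[0] ⟶ Δ[q]`. -/
def stdVert (q : ℕ) (k : Fin (q + 1)) : (Δ[0] : SSet) ⟶ (Δ[q] : SSet) :=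
  SSet.stdSimplex.map (SimplexCategory.const _ _ k)

/-- The vertex `k` of the standard simplex `Δ[q]`, as a `0`-simplex. -/
def vertStd (q : ℕ) (k : Fin (q + 1)) : (Δ[q] : SSet).obj (op (SimplexCategory.mk 0)) :=
  SSet.stdSimplex.objEquiv.symm (SimplexCategory.const _ _ k)

/-! ### Auxiliary lemmas -/

universe uu

/-- The object `op [0]`. -/
abbrev X0 : SimplexCategoryᵒᵖ := op (SimplexCategory.mk 0)

/-- The vertex index of a `0`-simplex of `Δ[q]`. -/
def vIdx {q : ℕ} (x : (Δ[q] : SSet.{uu}).obj X0) : Fin (q + 1) :=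
  (SSet.stdSimplex.objEquiv x).toOrderHom 0

lemma vIdx_stdVert {q : ℕ} (k : Fin (q+1)) (x : (Δ[0] : SSet.{uu}).obj X0) :
    vIdx ((stdVert.{uu} q k).app _ x) = k := rfl

lemma vIdx_map {q r : ℕ} (φ : SimplexCategory.mk q ⟶ SimplexCategory.mk r)
    (x : (Δ[q] : SSet.{uu}).obj X0) :
    vIdx ((SSet.stdSimplex.map φ).app _ x) = φ.toOrderHom (vIdx x) := rfl

lemma eq_stdVert {q : ℕ} (x : (Δ[q] : SSet.{uu}).obj X0) :
    x = (stdVert q (vIdx x)).app _ (vertStd 0 0) := by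
  apply SSet.stdSimplex.objEquiv.injective
  exact SimplexCategory.eq_const_of_zero _

lemma pt_unique (x : (Δ[0] : SSet.{uu}).obj X0) : x = vertStd 0 0 := by
  apply SSet.stdSimplex.objEquiv.injective
  exact SimplexCategory.eq_const_to_zero _

lemma stdVert_comp {q r : ℕ} (φ : SimplexCategory.mk q ⟶ SimplexCategory.mk r) (k : Fin (q+1)) :
    stdVert.{uu} q k ≫ SSet.stdSimplex.map φ = stdVert r (φ.toOrderHom k) := by
  rw [stdVert, stdVert, ← SimplexCategory.const_comp]
  exact (Functor.map_comp _ _ _).symm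

lemma delta_last (l : ℕ) (v : Fin (l+1)) :
    (SimplexCategory.δ (Fin.last (l + 1))).toOrderHom v = v.castSucc := by
  simp [SimplexCategory.δ, Fin.succAbove_last]

/-- Applying an equality of simplicial maps to an element. -/
lemma happ {F G : SSet.{uu}} {f g : F ⟶ G} (h : f = g) (X : SimplexCategoryᵒᵖ) (x : F.obj X) :
    f.app X x = g.app X x := by rw [h]

abbrev ev (X : SimplexCategoryᵒᵖ) : SSet.{uu} ⥤ Type uu :=
  (evaluation SimplexCategoryᵒᵖ (Type uu)).obj X

instance instPres {J : Type} [SmallCategory J] (F : J ⥤ SSet.{uu}) (X : SimplexCategoryᵒᵖ) :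
    PreservesColimit F (ev.{uu} X) :=
  inferInstanceAs (PreservesColimit (show J ⥤ SimplexCategoryᵒᵖ ⥤ Type uu from F)
    ((evaluation SimplexCategoryᵒᵖ (Type uu)).obj X))

lemma exists_sigma {I : Type} (F : I → SSet.{uu}) (X : SimplexCategoryᵒᵖ) (x : (∐ F).obj X) :
    ∃ i y, (Sigma.ι F i).app X y = x := by
  obtain ⟨⟨i⟩, y, hy⟩ := Types.jointly_surjective_of_isColimit
    (isColimitOfPreserves (ev X) (colimit.isColimit (Discrete.functor F))) x
  exact ⟨i, y, hy⟩

/-- descending a map of types out of a sigma at a level -/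
noncomputable def sigmaDesc {I : Type} (F : I → SSet.{uu}) (X : SimplexCategoryᵒᵖ) {T : Type uu}
    (g : ∀ i, (F i).obj X → T) : (∐ F).obj X → T :=
  fun x => (isColimitOfPreserves (ev X) (colimit.isColimit (Discrete.functor F))).desc
    (Cocone.mk T (Discrete.natTrans (fun i => TypeCat.ofHom (g i.as)))) x

lemma sigmaDesc_ι {I : Type} (F : I → SSet.{uu}) (X : SimplexCategoryᵒᵖ) {T : Type uu}
    (g : ∀ i, (F i).obj X → T) (i : I) (y : (F i).obj X) :
    sigmaDesc F X g ((Sigma.ι F i).app X y) = g i y :=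
  ConcreteCategory.congr_hom ((isColimitOfPreserves (ev X)
    (colimit.isColimit (Discrete.functor F))).fac
    (Cocone.mk T (Discrete.natTrans (fun i => TypeCat.ofHom (g i.as)))) ⟨i⟩) y

lemma exists_pushout {F G H : SSet.{uu}} (f : F ⟶ G) (g : F ⟶ H) (X : SimplexCategoryᵒᵖ)
    (x : (pushout f g).obj X) :
    (∃ y, (pushout.inl f g).app X y = x) ∨ (∃ z, (pushout.inr f g).app X z = x) := by
  obtain ⟨j, y, hy⟩ := Types.jointly_surjective_of_isColimit
    (isColimitOfPreserves (ev X) (colimit.isColimit (span f g))) x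
  rcases j with _ | _ | _
  · left
    refine ⟨(f.app X) y, ?_⟩
    rw [← hy]
    exact ConcreteCategory.congr_hom (congrArg (fun (h : _ ⟶ pushout f g) => h.app X)
      (colimit.w (span f g) WalkingSpan.Hom.fst)) y
  · exact Or.inl ⟨y, hy⟩
  · exact Or.inr ⟨y, hy⟩

noncomputable def poDesc {F G H : SSet.{uu}} (f : F ⟶ G) (g : F ⟶ H) (X : SimplexCategoryᵒᵖ)
    {T : Type uu} (gl : G.obj X → T) (gr : H.obj X → T)
    (w : gl ∘ f.app X = gr ∘ g.app X) : (pushout f g).obj X → T :=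
  fun x => PushoutCocone.IsColimit.desc
    (isColimitOfHasPushoutOfPreservesColimit (ev X) f g) (TypeCat.ofHom gl) (TypeCat.ofHom gr)
    (ConcreteCategory.hom_ext _ _ fun x => congr_fun w x) x

lemma poDesc_inl {F G H : SSet.{uu}} (f : F ⟶ G) (g : F ⟶ H) (X : SimplexCategoryᵒᵖ)
    {T : Type uu} (gl : G.obj X → T) (gr : H.obj X → T) (w : gl ∘ f.app X = gr ∘ g.app X)
    (y : G.obj X) : poDesc f g X gl gr w ((pushout.inl f g).app X y) = gl y :=
  ConcreteCategory.congr_hom (PushoutCocone.IsColimit.inl_desc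
    (isColimitOfHasPushoutOfPreservesColimit (ev X) f g) (TypeCat.ofHom gl) (TypeCat.ofHom gr)
    (ConcreteCategory.hom_ext _ _ fun x => congr_fun w x)) y

lemma poDesc_inr {F G H : SSet.{uu}} (f : F ⟶ G) (g : F ⟶ H) (X : SimplexCategoryᵒᵖ)
    {T : Type uu} (gl : G.obj X → T) (gr : H.obj X → T) (w : gl ∘ f.app X = gr ∘ g.app X)
    (z : H.obj X) : poDesc f g X gl gr w ((pushout.inr f g).app X z) = gr z :=
  ConcreteCategory.congr_hom (PushoutCocone.IsColimit.inr_desc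
    (isColimitOfHasPushoutOfPreservesColimit (ev X) f g) (TypeCat.ofHom gl) (TypeCat.ofHom gr)
    (ConcreteCategory.hom_ext _ _ fun x => congr_fun w x)) z

section Cone

variable (A B : Type) (u : A → B) (l m : ℕ)
  (μ : SimplexCategory.mk l ⟶ SimplexCategory.mk m)

/-- The map `∐_{a ∈ A} Δ[l] ⟶ ∐_{b ∈ B} Δ[m]` sending the copy of `Δ[l]` indexed by `a`
into the copy of `Δ[m]` indexed by `u a` via `μ`. -/
noncomputable def toLB : (∐ fun _ : A => (Δ[l] : SSet)) ⟶ (∐ fun _ : B => (Δ[m] : SSet)) :=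
  Sigma.desc fun a => SSet.stdSimplex.map μ ≫ Sigma.ι (fun _ : B => (Δ[m] : SSet)) (u a)

/-- The map `∐_{a ∈ A} Δ[l] ⟶ ∐_{a ∈ A} Δ[l+1]` given on each summand by the face
`d^{l+1}`. -/
noncomputable def toLA1 : (∐ fun _ : A => (Δ[l] : SSet)) ⟶ (∐ fun _ : A => (Δ[l+1] : SSet)) :=
  Sigma.desc fun a =>
    SSet.stdSimplex.map (SimplexCategory.δ (Fin.last (l + 1))) ≫
      Sigma.ι (fun _ : A => (Δ[l+1] : SSet)) a

/-- The amalgam `(∐_{b ∈ B} Δ[m]) ⊔_{∐_{a ∈ A} Δ[l]} (∐_{a ∈ A} Δ[l+1])`. -/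
noncomputable def LL : SSet := pushout (toLB A B u l m μ) (toLA1 A l)

/-- The left leg of the defining span of `C(μ,u)`: it picks, in the `(i,b)`-summand, the
vertex `i` of the copy of `Δ[m]` indexed by `b`, and in the `a`-summand the vertex `l+1`
of the copy of `Δ[l+1]` indexed by `a`. -/
noncomputable def midToL :
    (∐ fun _ : ((Fin (m + 1) × B) ⊕ A) => (Δ[0] : SSet)) ⟶ LL A B u l m μ :=
  Sigma.desc fun (x : (Fin (m + 1) × B) ⊕ A) =>
    match x with
    | Sum.inl (i, b) => stdVert m i ≫ Sigma.ι (fun _ : B => (Δ[m] : SSet)) b ≫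
        pushout.inl (toLB A B u l m μ) (toLA1 A l)
    | Sum.inr a => stdVert (l + 1) (Fin.last (l + 1)) ≫
        Sigma.ι (fun _ : A => (Δ[l+1] : SSet)) a ≫
        pushout.inr (toLB A B u l m μ) (toLA1 A l)

/-- The right leg of the defining span of `C(μ,u)`: it sends the `(i,b)`-summands to the
point indexed by `i` and the `a`-summands to the point indexed by `m+1`. -/
noncomputable def midToR :
    (∐ fun _ : ((Fin (m + 1) × B) ⊕ A) => (Δ[0] : SSet)) ⟶
      (∐ fun _ : Fin (m + 2) => (Δ[0] : SSet)) :=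
  Sigma.desc fun (x : (Fin (m + 1) × B) ⊕ A) =>
    match x with
    | Sum.inl (i, _) => Sigma.ι (fun _ : Fin (m + 2) => (Δ[0] : SSet)) i.castSucc
    | Sum.inr _ => Sigma.ι (fun _ : Fin (m + 2) => (Δ[0] : SSet)) (Fin.last (m + 1))

/-- The simplicial set `C(μ,u)`, defined as the pushout of the span with legs `midToL`
and `midToR`. -/
noncomputable def CC : SSet := pushout (midToL A B u l m μ) (midToR A B m)

/-- The vertices `0, 1, …, m+1` of `C(μ,u)`, i.e. the images of the points of
`∐_{0 ≤ i ≤ m+1} Δ[0]` under the canonical map to the pushout. -/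
noncomputable def vertC (i : Fin (m + 2)) :
    (CC A B u l m μ).obj (op (SimplexCategory.mk 0)) :=
  (Sigma.ι (fun _ : Fin (m + 2) => (Δ[0] : SSet)) i ≫
      pushout.inr (midToL A B u l m μ) (midToR A B m)).app
    (op (SimplexCategory.mk 0)) (vertStd 0 0)

/-- The map `μ + 1 : [l+1] ⟶ [m+1]` extending `μ` by sending `l+1` to `m+1`. -/
def muPlus : SimplexCategory.mk (l + 1) ⟶ SimplexCategory.mk (m + 1) :=
  SimplexCategory.Hom.mk
    { toFun := fun i =>
        if h : (i : ℕ) < l + 1 then (μ.toOrderHom ⟨(i : ℕ), h⟩).castSucc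
        else Fin.last (m + 1)
      monotone' := by
        intro i j hij
        by_cases hi : (i : ℕ) < l + 1 <;> by_cases hj : (j : ℕ) < l + 1
        · simp only [hi, hj, dif_pos]
          exact Fin.castSucc_le_castSucc_iff.mpr (μ.toOrderHom.monotone hij)
        · simp only [hi, hj, dif_pos, dif_neg, not_false_iff]
          exact Fin.le_last _
        · exfalso
          have h' : (i : ℕ) ≤ (j : ℕ) := hij
          omega
        · simp only [hi, hj, dif_neg, not_false_iff]
          exact le_refl _ }


/-! ### auxiliary lemmas about `muPlus` and the structure maps -/

lemma muPlus_castSucc (v : Fin (l + 1)) :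
    (muPlus l m μ).toOrderHom v.castSucc = (μ.toOrderHom v).castSucc := by
  show (if h : ((v.castSucc : Fin (l+2)) : ℕ) < l + 1
      then (μ.toOrderHom ⟨((v.castSucc : Fin (l+2)) : ℕ), h⟩).castSucc
      else Fin.last (m + 1)) = _
  rw [dif_pos (show ((v.castSucc : Fin (l+2)) : ℕ) < l + 1 from v.isLt)]
  congr 1

lemma muPlus_last :
    (muPlus l m μ).toOrderHom (Fin.last (l + 1)) = Fin.last (m + 1) := by
  show (if h : ((Fin.last (l+1) : Fin (l+2)) : ℕ) < l + 1 then _ else Fin.last (m + 1)) = _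
  rw [dif_neg (by simp)]

lemma muPlus_delta (v : Fin (l + 1)) :
    (muPlus l m μ).toOrderHom ((SimplexCategory.δ (Fin.last (l + 1))).toOrderHom v)
      = (μ.toOrderHom v).castSucc := by
  rw [delta_last, muPlus_castSucc]

lemma toLB_ι (a : A) : Sigma.ι (fun _ : A => (Δ[l] : SSet)) a ≫ toLB A B u l m μ =
    SSet.stdSimplex.map μ ≫ Sigma.ι (fun _ : B => (Δ[m] : SSet)) (u a) := by
  simp [toLB]

lemma toLA1_ι (a : A) : Sigma.ι (fun _ : A => (Δ[l] : SSet)) a ≫ toLA1 A l =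
    SSet.stdSimplex.map (SimplexCategory.δ (Fin.last (l + 1))) ≫
      Sigma.ι (fun _ : A => (Δ[l+1] : SSet)) a := by
  simp [toLA1]

lemma midToL_ι_inl (i : Fin (m + 1)) (b : B) :
    Sigma.ι (fun _ : ((Fin (m + 1) × B) ⊕ A) => (Δ[0] : SSet)) (Sum.inl (i, b)) ≫
      midToL A B u l m μ =
    stdVert m i ≫ Sigma.ι (fun _ : B => (Δ[m] : SSet)) b ≫
      pushout.inl (toLB A B u l m μ) (toLA1 A l) := by
  simp [midToL]
  rfl

lemma midToL_ι_inr (a : A) :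
    Sigma.ι (fun _ : ((Fin (m + 1) × B) ⊕ A) => (Δ[0] : SSet)) (Sum.inr a) ≫
      midToL A B u l m μ =
    stdVert (l + 1) (Fin.last (l + 1)) ≫ Sigma.ι (fun _ : A => (Δ[l+1] : SSet)) a ≫
      pushout.inr (toLB A B u l m μ) (toLA1 A l) := by
  simp [midToL]
  rfl

lemma midToR_ι_inl (i : Fin (m + 1)) (b : B) :
    Sigma.ι (fun _ : ((Fin (m + 1) × B) ⊕ A) => (Δ[0] : SSet)) (Sum.inl (i, b)) ≫
      midToR A B m =
    Sigma.ι (fun _ : Fin (m + 2) => (Δ[0] : SSet)) i.castSucc := by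
  simp [midToR]

lemma midToR_ι_inr (a : A) :
    Sigma.ι (fun _ : ((Fin (m + 1) × B) ⊕ A) => (Δ[0] : SSet)) (Sum.inr a) ≫
      midToR A B m =
    Sigma.ι (fun _ : Fin (m + 2) => (Δ[0] : SSet)) (Fin.last (m + 1)) := by
  simp [midToR]

/-! ### the vertex-counting function -/

noncomputable def gB : (∐ fun _ : B => (Δ[m] : SSet)).obj X0 → ULift.{0} (Fin (m + 2)) :=
  sigmaDesc _ _ (fun _ x => ULift.up (vIdx x).castSucc)

noncomputable def gA : (∐ fun _ : A => (Δ[l+1] : SSet)).obj X0 → ULift.{0} (Fin (m + 2)) :=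
  sigmaDesc _ _ (fun _ y => ULift.up ((muPlus l m μ).toOrderHom (vIdx y)))

noncomputable def gR : (∐ fun _ : Fin (m + 2) => (Δ[0] : SSet)).obj X0 →
    ULift.{0} (Fin (m + 2)) :=
  sigmaDesc _ _ (fun i _ => ULift.up i)

lemma wLL : gB B m ∘ (toLB A B u l m μ).app X0 = gA A l m μ ∘ (toLA1 A l).app X0 := by
  funext x
  obtain ⟨a, y, rfl⟩ := exists_sigma _ _ x
  have h1 : (toLB A B u l m μ).app X0 ((Sigma.ι (fun _ : A => (Δ[l] : SSet)) a).app X0 y)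
      = (Sigma.ι (fun _ : B => (Δ[m] : SSet)) (u a)).app X0
          ((SSet.stdSimplex.map μ).app X0 y) :=
    happ (toLB_ι A B u l m μ a) X0 y
  have h2 : (toLA1 A l).app X0 ((Sigma.ι (fun _ : A => (Δ[l] : SSet)) a).app X0 y)
      = (Sigma.ι (fun _ : A => (Δ[l+1] : SSet)) a).app X0
          ((SSet.stdSimplex.map (SimplexCategory.δ (Fin.last (l + 1)))).app X0 y) :=
    happ (toLA1_ι A l a) X0 y
  show gB B m ((toLB A B u l m μ).app X0 _) = gA A l m μ ((toLA1 A l).app X0 _)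
  rw [h1, h2, gB, gA, sigmaDesc_ι, sigmaDesc_ι]
  exact congrArg ULift.up (muPlus_delta l m μ (vIdx y)).symm

/-- the vertex function on `LL`. -/
noncomputable def gL : (LL A B u l m μ).obj X0 → ULift.{0} (Fin (m + 2)) :=
  poDesc _ _ X0 (gB B m) (gA A l m μ) (wLL A B u l m μ)

lemma wCC : gL A B u l m μ ∘ (midToL A B u l m μ).app X0
    = gR m ∘ (midToR A B m).app X0 := by
  funext x
  obtain ⟨j, y, rfl⟩ := exists_sigma _ _ x
  show gL A B u l m μ ((midToL A B u l m μ).app X0 _) = gR m ((midToR A B m).app X0 _)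
  rcases j with ⟨i, b⟩ | a
  · have h1 : (midToL A B u l m μ).app X0
        ((Sigma.ι (fun _ : ((Fin (m + 1) × B) ⊕ A) => (Δ[0] : SSet))
          (Sum.inl (i, b))).app X0 y)
        = (pushout.inl (toLB A B u l m μ) (toLA1 A l)).app X0
            ((Sigma.ι (fun _ : B => (Δ[m] : SSet)) b).app X0 ((stdVert m i).app X0 y)) :=
      happ (midToL_ι_inl A B u l m μ i b) X0 y
    have h2 : (midToR A B m).app X0
        ((Sigma.ι (fun _ : ((Fin (m + 1) × B) ⊕ A) => (Δ[0] : SSet))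
          (Sum.inl (i, b))).app X0 y)
        = (Sigma.ι (fun _ : Fin (m + 2) => (Δ[0] : SSet)) i.castSucc).app X0 y :=
      happ (midToR_ι_inl A B m i b) X0 y
    rw [h1, h2, gL, poDesc_inl, gB, sigmaDesc_ι, gR, sigmaDesc_ι, vIdx_stdVert]
  · have h1 : (midToL A B u l m μ).app X0
        ((Sigma.ι (fun _ : ((Fin (m + 1) × B) ⊕ A) => (Δ[0] : SSet))
          (Sum.inr a)).app X0 y)
        = (pushout.inr (toLB A B u l m μ) (toLA1 A l)).app X0
            ((Sigma.ι (fun _ : A => (Δ[l+1] : SSet)) a).app X0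
              ((stdVert (l + 1) (Fin.last (l + 1))).app X0 y)) :=
      happ (midToL_ι_inr A B u l m μ a) X0 y
    have h2 : (midToR A B m).app X0
        ((Sigma.ι (fun _ : ((Fin (m + 1) × B) ⊕ A) => (Δ[0] : SSet))
          (Sum.inr a)).app X0 y)
        = (Sigma.ι (fun _ : Fin (m + 2) => (Δ[0] : SSet)) (Fin.last (m + 1))).app X0 y :=
      happ (midToR_ι_inr A B m a) X0 y
    rw [h1, h2, gL, poDesc_inr, gA, sigmaDesc_ι, gR, sigmaDesc_ι]
    exact congrArg ULift.up (muPlus_last l m μ)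

/-- The vertex-index function on `C(μ,u)`. -/
noncomputable def phi : (CC A B u l m μ).obj X0 → Fin (m + 2) := fun x =>
  (poDesc _ _ X0 (gL A B u l m μ) (gR m) (wCC A B u l m μ) x).down

lemma phi_vertC (i : Fin (m + 2)) : phi A B u l m μ (vertC A B u l m μ i) = i := by
  show (poDesc _ _ X0 (gL A B u l m μ) (gR m) (wCC A B u l m μ)
    ((pushout.inr (midToL A B u l m μ) (midToR A B m)).app X0
      ((Sigma.ι (fun _ : Fin (m + 2) => (Δ[0] : SSet)) i).app X0 (vertStd 0 0)))).down = i
  rw [poDesc_inr, gR, sigmaDesc_ι]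

lemma inl_inl_eq (v : Fin (m + 1)) (b : B) :
    (pushout.inl (midToL A B u l m μ) (midToR A B m)).app X0
      ((pushout.inl (toLB A B u l m μ) (toLA1 A l)).app X0
        ((Sigma.ι (fun _ : B => (Δ[m] : SSet)) b).app X0
          ((stdVert m v).app X0 (vertStd 0 0))))
    = vertC A B u l m μ v.castSucc := by
  have h1 : (midToL A B u l m μ).app X0
      ((Sigma.ι (fun _ : ((Fin (m + 1) × B) ⊕ A) => (Δ[0] : SSet))
        (Sum.inl (v, b))).app X0 (vertStd 0 0))
      = (pushout.inl (toLB A B u l m μ) (toLA1 A l)).app X0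
          ((Sigma.ι (fun _ : B => (Δ[m] : SSet)) b).app X0
            ((stdVert m v).app X0 (vertStd 0 0))) :=
    happ (midToL_ι_inl A B u l m μ v b) X0 _
  have h3 : (pushout.inl (midToL A B u l m μ) (midToR A B m)).app X0
      ((midToL A B u l m μ).app X0
        ((Sigma.ι (fun _ : ((Fin (m + 1) × B) ⊕ A) => (Δ[0] : SSet))
          (Sum.inl (v, b))).app X0 (vertStd 0 0)))
      = (pushout.inr (midToL A B u l m μ) (midToR A B m)).app X0
          ((midToR A B m).app X0
            ((Sigma.ι (fun _ : ((Fin (m + 1) × B) ⊕ A) => (Δ[0] : SSet))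
              (Sum.inl (v, b))).app X0 (vertStd 0 0))) :=
    happ pushout.condition X0 _
  have h2 : (midToR A B m).app X0
      ((Sigma.ι (fun _ : ((Fin (m + 1) × B) ⊕ A) => (Δ[0] : SSet))
        (Sum.inl (v, b))).app X0 (vertStd 0 0))
      = (Sigma.ι (fun _ : Fin (m + 2) => (Δ[0] : SSet)) v.castSucc).app X0 (vertStd 0 0) :=
    happ (midToR_ι_inl A B m v b) X0 _
  rw [← h1, h3, h2]
  exact rfl

lemma inl_inr_eq (w : Fin (l + 2)) (a : A) :
    ∃ i, vertC A B u l m μ i =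
      (pushout.inl (midToL A B u l m μ) (midToR A B m)).app X0
        ((pushout.inr (toLB A B u l m μ) (toLA1 A l)).app X0
          ((Sigma.ι (fun _ : A => (Δ[l+1] : SSet)) a).app X0
            ((stdVert (l + 1) w).app X0 (vertStd 0 0)))) := by
  induction w using Fin.lastCases with
  | last =>
    refine ⟨Fin.last (m + 1), ?_⟩
    have h1 : (midToL A B u l m μ).app X0
        ((Sigma.ι (fun _ : ((Fin (m + 1) × B) ⊕ A) => (Δ[0] : SSet))
          (Sum.inr a)).app X0 (vertStd 0 0))
        = (pushout.inr (toLB A B u l m μ) (toLA1 A l)).app X0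
            ((Sigma.ι (fun _ : A => (Δ[l+1] : SSet)) a).app X0
              ((stdVert (l + 1) (Fin.last (l + 1))).app X0 (vertStd 0 0))) :=
      happ (midToL_ι_inr A B u l m μ a) X0 _
    have h3 : (pushout.inl (midToL A B u l m μ) (midToR A B m)).app X0
        ((midToL A B u l m μ).app X0
          ((Sigma.ι (fun _ : ((Fin (m + 1) × B) ⊕ A) => (Δ[0] : SSet))
            (Sum.inr a)).app X0 (vertStd 0 0)))
        = (pushout.inr (midToL A B u l m μ) (midToR A B m)).app X0
            ((midToR A B m).app X0
              ((Sigma.ι (fun _ : ((Fin (m + 1) × B) ⊕ A) => (Δ[0] : SSet))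
                (Sum.inr a)).app X0 (vertStd 0 0))) :=
      happ pushout.condition X0 _
    have h2 : (midToR A B m).app X0
        ((Sigma.ι (fun _ : ((Fin (m + 1) × B) ⊕ A) => (Δ[0] : SSet))
          (Sum.inr a)).app X0 (vertStd 0 0))
        = (Sigma.ι (fun _ : Fin (m + 2) => (Δ[0] : SSet)) (Fin.last (m + 1))).app X0
            (vertStd 0 0) :=
      happ (midToR_ι_inr A B m a) X0 _
    symm
    rw [← h1, h3, h2]
    exact rfl
  | cast v' =>
    refine ⟨(μ.toOrderHom v').castSucc, ?_⟩
    have e0 : stdVert (l + 1) v'.castSucc =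
        stdVert l v' ≫ SSet.stdSimplex.map (SimplexCategory.δ (Fin.last (l + 1))) := by
      rw [stdVert_comp, delta_last]
    have s0 : (stdVert (l + 1) v'.castSucc).app X0 (vertStd 0 0)
        = (SSet.stdSimplex.map (SimplexCategory.δ (Fin.last (l + 1)))).app X0
            ((stdVert l v').app X0 (vertStd 0 0)) :=
      happ e0 X0 _
    have h4 : (toLA1 A l).app X0
        ((Sigma.ι (fun _ : A => (Δ[l] : SSet)) a).app X0
          ((stdVert l v').app X0 (vertStd 0 0)))
        = (Sigma.ι (fun _ : A => (Δ[l+1] : SSet)) a).app X0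
            ((SSet.stdSimplex.map (SimplexCategory.δ (Fin.last (l + 1)))).app X0
              ((stdVert l v').app X0 (vertStd 0 0))) :=
      happ (toLA1_ι A l a) X0 _
    have h5 : (pushout.inl (toLB A B u l m μ) (toLA1 A l)).app X0
        ((toLB A B u l m μ).app X0
          ((Sigma.ι (fun _ : A => (Δ[l] : SSet)) a).app X0
            ((stdVert l v').app X0 (vertStd 0 0))))
        = (pushout.inr (toLB A B u l m μ) (toLA1 A l)).app X0
            ((toLA1 A l).app X0
              ((Sigma.ι (fun _ : A => (Δ[l] : SSet)) a).app X0
                ((stdVert l v').app X0 (vertStd 0 0)))) :=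
      happ pushout.condition X0 _
    have h6 : (toLB A B u l m μ).app X0
        ((Sigma.ι (fun _ : A => (Δ[l] : SSet)) a).app X0
          ((stdVert l v').app X0 (vertStd 0 0)))
        = (Sigma.ι (fun _ : B => (Δ[m] : SSet)) (u a)).app X0
            ((SSet.stdSimplex.map μ).app X0 ((stdVert l v').app X0 (vertStd 0 0))) :=
      happ (toLB_ι A B u l m μ a) X0 _
    have s1 : (SSet.stdSimplex.map μ).app X0 ((stdVert l v').app X0 (vertStd 0 0))
        = (stdVert m (μ.toOrderHom v')).app X0 (vertStd 0 0) :=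
      happ (stdVert_comp μ v') X0 _
    rw [s0, ← h4, ← h5, h6, s1]
    exact (inl_inl_eq A B u l m μ (μ.toOrderHom v') (u a)).symm

/-- The simplicial set `C(μ,u)` has exactly `m+2` vertices: the canonical
map `∐_{0 ≤ i ≤ m+1} Δ[0] ⟶ C(μ,u)` from the defining pushout induces a bijection from
`{0, 1, …, m+1}` onto the set of `0`-simplices of `C(μ,u)`. -/
theorem statement_1 (hμ : Function.Injective μ.toOrderHom) :
    Function.Bijective (fun i : Fin (m + 2) => vertC A B u l m μ i) := by
  constructor
  · intro i j h
    have h2 : phi A B u l m μ (vertC A B u l m μ i) = phi A B u l m μ (vertC A B u l m μ j) :=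
      congrArg _ h
    rwa [phi_vertC, phi_vertC] at h2
  · intro x
    rcases exists_pushout (midToL A B u l m μ) (midToR A B m) X0 x with ⟨y, rfl⟩ | ⟨z, rfl⟩
    · rcases exists_pushout (toLB A B u l m μ) (toLA1 A l) X0 y with ⟨s, rfl⟩ | ⟨s, rfl⟩
      · obtain ⟨b, t, rfl⟩ := exists_sigma _ _ s
        rw [eq_stdVert t]
        exact ⟨(vIdx t).castSucc, (inl_inl_eq A B u l m μ (vIdx t) b).symm⟩
      · obtain ⟨a, t, rfl⟩ := exists_sigma _ _ s
        rw [eq_stdVert t]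
        exact inl_inr_eq A B u l m μ (vIdx t) a
    · obtain ⟨i, w, rfl⟩ := exists_sigma _ _ z
      rw [pt_unique w]
      exact ⟨i, rfl⟩


end Cone

end Paper
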